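/- Let P be a positive opetope, x⃗, x⃗' ∈ Cyl_h(P) two faces (flags or p-flags) with the same projection π_P(x⃗) = π_P(x⃗') = x_{k+1} ∈ P_{k+1}, and with δ(x⃗) = δ(x⃗') and γ(x⃗) = γ(x⃗'). Then x⃗ = x⃗'. -/

import Mathlib

open scoped Classical

structure PHg where
  Face : ℕ → Type
  fin : ∀ k, Finite (Face k)
  γ : ∀ k, Face (k+1) → Face k
  δ : ∀ k, Face (k+1) → Face k → Prop
  δ_total : ∀ k a, ∃ x, δ k a x
  δ0_fun : ∀ (a : Face 1) (x y : Face 0), δ 0 a x → δ 0 a y → x = y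
  bounded : ∃ n, ∀ k, n < k → IsEmpty (Face k)

abbrev PHg.FaceS (S : PHg) : Type := Σ k, S.Face k

/-- The codomain operation, viewed on faces of arbitrary dimension
(identity in dimension 0). -/
def gammaS (S : PHg) : S.FaceS → S.FaceS
  | ⟨0, x⟩ => ⟨0, x⟩
  | ⟨k+1, x⟩ => ⟨k, S.γ k x⟩

/-- `x ∈ δ(q)`. -/
def inDelta (S : PHg) (x q : S.FaceS) : Prop :=
  match q with
  | ⟨0, _⟩ => False
  | ⟨k+1, a⟩ => ∃ h : x.1 = k, S.δ k a (h ▸ x.2)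

/-- `x = γ(q)` (for `q` of positive dimension). -/
def inGammaS (S : PHg) (x q : S.FaceS) : Prop := 0 < q.1 ∧ gammaS S q = x

/-- `x ∈ ∂(q) = {γ(q)} ∪ δ(q)`. -/
def inBoundary (S : PHg) (x q : S.FaceS) : Prop := inGammaS S x q ∨ inDelta S x q

def covPlus (S : PHg) (a b : S.FaceS) : Prop :=
  ∃ α, inDelta S a α ∧ gammaS S α = b

/-- The upper order `<⁺`. -/
def ltPlus (S : PHg) : S.FaceS → S.FaceS → Prop := Relation.TransGen (covPlus S)

def lePlus (S : PHg) (a b : S.FaceS) : Prop := a = b ∨ ltPlus S a b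

def perpPlus (S : PHg) (a b : S.FaceS) : Prop := ltPlus S a b ∨ ltPlus S b a

def covMinus (S : PHg) (a b : S.FaceS) : Prop := 0 < a.1 ∧ inDelta S (gammaS S a) b

/-- The lower order `<⁻`. -/
def ltMinus (S : PHg) : S.FaceS → S.FaceS → Prop := Relation.TransGen (covMinus S)

def perpMinus (S : PHg) (a b : S.FaceS) : Prop := ltMinus S a b ∨ ltMinus S b a

/-- Iterated codomain `γ^{(k)}`. -/
def gammaIter (S : PHg) (k : ℕ) (p : S.FaceS) : S.FaceS := (gammaS S)^[p.1 - k] p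

/-- `X` is a `<⁺`-interval. -/
def IntervalPlus (S : PHg) (X : Set S.FaceS) : Prop :=
  X = ∅ ∨ ∃ x0 x1, lePlus S x0 x1 ∧ X = {x | lePlus S x0 x ∧ lePlus S x x1}

def hasDim (S : PHg) (n : ℕ) : Prop :=
  Nonempty (S.Face n) ∧ ∀ k, n < k → IsEmpty (S.Face k)

/-- A positive opetope: a nonempty positive hypergraph satisfying globularity,
strictness, disjointness, pencil linearity, and having at most one face outside
`δ(S_{k+1})` in each dimension. -/
structure IsOpetope (S : PHg) : Prop where
  ne : Nonempty (S.Face 0)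
  glob_gamma : ∀ a : S.FaceS, 2 ≤ a.1 →
    ({gammaS S (gammaS S a)} : Set S.FaceS) =
      {x | ∃ y, inDelta S y a ∧ gammaS S y = x} \ {x | ∃ y, inDelta S y a ∧ inDelta S x y}
  glob_delta : ∀ a : S.FaceS, 2 ≤ a.1 →
    {x | inDelta S x (gammaS S a)} =
      {x | ∃ y, inDelta S y a ∧ inDelta S x y} \ {x | ∃ y, inDelta S y a ∧ gammaS S y = x}
  strict : ∀ a, ¬ ltPlus S a a
  linear0 : ∀ a b : S.FaceS, a.1 = 0 → b.1 = 0 → a = b ∨ perpPlus S a b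
  disj : ∀ a b : S.FaceS, 0 < a.1 → ¬ (perpMinus S a b ∧ perpPlus S a b)
  pencil_gamma : ∀ x a b, inGammaS S x a → inGammaS S x b → a = b ∨ perpPlus S a b
  pencil_delta : ∀ x a b, inDelta S x a → inDelta S x b → a = b ∨ perpPlus S a b
  size_le_one : ∀ k (a b : S.Face k),
    (¬ ∃ α : S.Face (k+1), S.δ k α a) → (¬ ∃ α : S.Face (k+1), S.δ k α b) → a = b
/-- A restricted flag from dimension `m` down to dimension `l`,
encoded as a function `ℕ → S.FaceS` (entries outside `[l,m]` are irrelevant). -/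
def IsRFlag (S : PHg) (m l : ℕ) (F : ℕ → S.FaceS) : Prop :=
  (∀ i, l ≤ i → i ≤ m → (F i).1 = i) ∧
  (∀ i, l ≤ i → i < m → inBoundary S (F i) (F (i+1)))

/-- The pencil order `≺ₓ` on the pencil over `x`. -/
def pencilLt (S : PHg) (x a b : S.FaceS) : Prop :=
  (inGammaS S x b ∧ inDelta S x a) ∨
  (inDelta S x a ∧ inDelta S x b ∧ ltPlus S a b) ∨
  (inGammaS S x a ∧ inGammaS S x b ∧ ltPlus S b a)

/-- The sign of the flag segment `[F j, …, F l]`. -/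
noncomputable def sgnSeg (S : PHg) (l : ℕ) (F : ℕ → S.FaceS) : ℕ → ℤ
  | 0 => 1
  | j+1 => if l ≤ j ∧ inDelta S (F j) (F (j+1)) then -(sgnSeg S l F j) else sgnSeg S l F j

/-- The flag order `◁` on flags from dimension `m` down to `l`. -/
def flagLt (S : PHg) (l m : ℕ) (F G : ℕ → S.FaceS) : Prop :=
  ∃ k, l ≤ k ∧ k ≤ m ∧ (∀ i, l ≤ i → i < k → F i = G i) ∧ F k ≠ G k ∧
    ((k = 0 ∧ ltPlus S (G 0) (F 0)) ∨
     (0 < k ∧ sgnSeg S l F (k-1) = 1 ∧ pencilLt S (F (k-1)) (F k) (G k)) ∨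
     (0 < k ∧ sgnSeg S l F (k-1) = -1 ∧ pencilLt S (F (k-1)) (G k) (F k)))

/-- `i` is the low level `ll` of the flag `F` (with top dimension `n`). -/
def LowLevelT (S : PHg) (n : ℕ) (F : ℕ → S.FaceS) (i : ℕ) : Prop :=
  i + 2 ≤ n ∧ inDelta S (F (i+1)) (F (i+2)) ∧
    ∀ j, i < j → j + 2 ≤ n → ¬ inDelta S (F (j+1)) (F (j+2))

/-- Membership in `Flags[t / b]`, flags from top face `t` (dim `m`) to bottom face `b` (dim `l`). -/
def MemFlags (S : PHg) (l m : ℕ) (t b : S.FaceS) (F : ℕ → S.FaceS) : Prop :=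
  IsRFlag S m l F ∧ F m = t ∧ F l = b

def EqOnFl {α : Type*} (l m : ℕ) (F G : ℕ → α) : Prop :=
  ∀ i, l ≤ i → i ≤ m → F i = G i

/-- `G` is the successor of `F` in `Flags[t / b]` with respect to the flag order. -/
def SuccFl (S : PHg) (l m : ℕ) (t b : S.FaceS) (F G : ℕ → S.FaceS) : Prop :=
  MemFlags S l m t b F ∧ MemFlags S l m t b G ∧ flagLt S l m F G ∧
  ∀ H, MemFlags S l m t b H → flagLt S l m F H → (EqOnFl l m G H ∨ flagLt S l m G H)
/-- Faces of the cylinder: bottom flat faces `-p`, top flat faces `+p`,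
and (punctured) flags encoded as functions `ℕ → Option S.FaceS`
(`none` outside the support resp. at the puncture). -/
inductive CylFace (S : PHg) : Type
  | neg : S.FaceS → CylFace S
  | pos : S.FaceS → CylFace S
  | fl : (ℕ → Option S.FaceS) → CylFace S

/-- `x` encodes a flag `[x_m, …, x_0]`. -/
def IsFlagFn (S : PHg) (m : ℕ) (x : ℕ → Option S.FaceS) : Prop :=
  (∀ j, m < j → x j = none) ∧
  (∀ j, j ≤ m → ∃ p, x j = some p ∧ p.1 = j) ∧
  (∀ j, j < m → ∀ p q, x j = some p → x (j+1) = some q → inBoundary S p q)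

noncomputable def sgnO (S : PHg) (x : ℕ → Option S.FaceS) : ℕ → ℤ
  | 0 => 1
  | j+1 => if ∃ p q, x j = some p ∧ x (j+1) = some q ∧ inDelta S p q
           then -(sgnO S x j) else sgnO S x j

def oPencil (S : PHg) (c a b : Option S.FaceS) : Prop :=
  ∃ c' a' b', c = some c' ∧ a = some a' ∧ b = some b' ∧ pencilLt S c' a' b'

/-- The flag order on flags with top dimension `m`, in the `Option`-encoding. -/
def flagLtO (S : PHg) (m : ℕ) (x y : ℕ → Option S.FaceS) : Prop :=
  ∃ k, k ≤ m ∧ (∀ j, j < k → x j = y j) ∧ x k ≠ y k ∧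
    ((k = 0 ∧ ∃ p q, x 0 = some p ∧ y 0 = some q ∧ ltPlus S q p) ∨
     (0 < k ∧ sgnO S x (k-1) = 1 ∧ oPencil S (x (k-1)) (x k) (y k)) ∨
     (0 < k ∧ sgnO S x (k-1) = -1 ∧ oPencil S (x (k-1)) (y k) (x k)))

def LowLevelO (S : PHg) (m : ℕ) (x : ℕ → Option S.FaceS) (i : ℕ) : Prop :=
  i + 2 ≤ m ∧ (∃ p q, x (i+1) = some p ∧ x (i+2) = some q ∧ inDelta S p q) ∧
    ∀ j, i < j → j + 2 ≤ m →
      ¬ ∃ p q, x (j+1) = some p ∧ x (j+2) = some q ∧ inDelta S p q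

/-- `x` encodes a punctured flag with top dimension `m` and puncture at level `i`
(either a high p-flag, `i = m-1`, or a low p-flag, `i = ll`). -/
def IsPFlagFn (S : PHg) (m i : ℕ) (x : ℕ → Option S.FaceS) : Prop :=
  i < m ∧ x i = none ∧ ∃ y, IsFlagFn S m y ∧ (∀ j, j ≠ i → x j = y j) ∧
    (i + 1 = m ∨ LowLevelO S m y i)

def IsFirstFlag (S : PHg) (m : ℕ) (x : ℕ → Option S.FaceS) : Prop :=
  IsFlagFn S m x ∧ ∀ y, IsFlagFn S m y → y m = x m → (y = x ∨ flagLtO S m x y)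

def IsLastFlag (S : PHg) (m : ℕ) (x : ℕ → Option S.FaceS) : Prop :=
  IsFlagFn S m x ∧ ∀ y, IsFlagFn S m y → y m = x m → (y = x ∨ flagLtO S m y x)

/-- keep the levels `< m` only. -/
def truncO {α : Type*} (m : ℕ) (x : ℕ → Option α) : ℕ → Option α :=
  fun j => if m ≤ j then none else x j

/-- puncture at level `i`. -/
def punctO {α : Type*} (i : ℕ) (x : ℕ → Option α) : ℕ → Option α :=
  fun j => if j = i then none else x j

def oLeP (S : PHg) (o : Option S.FaceS) (t : S.FaceS) : Prop :=
  ∃ q, o = some q ∧ lePlus S q t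

/-- the low p-flag `[p, γ(p), …, γ^{(l+2)}(p), t, 0, x_{l-1}, …, x_0]`. -/
def lowShape (S : PHg) (p : S.FaceS) (l : ℕ) (t : S.FaceS)
    (x : ℕ → Option S.FaceS) : ℕ → Option S.FaceS :=
  fun j => if p.1 < j then none
    else if l + 2 ≤ j then some (gammaIter S j p)
    else if j = l + 1 then some t
    else if j = l then none
    else x j

def starG1 (S : PHg) (i : ℕ) (x : ℕ → Option S.FaceS) (p : S.FaceS) : Prop :=
  p.1 ≠ i ∧ x p.1 = some p

def starG2 (S : PHg) (i : ℕ) (x : ℕ → Option S.FaceS) (p : S.FaceS) : Prop :=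
  i < p.1 ∧ ∃ t, inDelta S t (gammaIter S (i+2) p) ∧ oLeP S (x (i+1)) t

def starG3 (S : PHg) (i : ℕ) (x : ℕ → Option S.FaceS) (p : S.FaceS) : Prop :=
  i ≤ p.1 ∧ 0 < i ∧ ∃ t, inDelta S t (gammaIter S (i+1) p) ∧
    ∃ q, x (i+1) = some q ∧ lePlus S (gammaS S q) t

def starG4 (S : PHg) (i : ℕ) (x : ℕ → Option S.FaceS) (p : S.FaceS) : Prop :=
  ∃ l t, l + 2 ≤ i ∧ l + 2 ≤ p.1 ∧ inDelta S t (gammaIter S (l+2) p) ∧ oLeP S (x (l+1)) t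

def starG5 (S : PHg) (i : ℕ) (x : ℕ → Option S.FaceS) (p : S.FaceS) : Prop :=
  (0 < i ∧ ∃ q, x 0 = some q ∧ lePlus S (gammaIter S 0 p) q) ∨
  (i = 0 ∧ ∃ q, x 1 = some q ∧ ltPlus S (gammaIter S 0 p) (gammaS S q))

def starG6 (S : PHg) (i : ℕ) (x : ℕ → Option S.FaceS) (p : S.FaceS) : Prop :=
  (0 < i ∧ ∃ q, x 0 = some q ∧ ltPlus S q (gammaIter S 0 p)) ∨
  (i = 0 ∧ ∃ q, x 1 = some q ∧ lePlus S (gammaS S q) (gammaIter S 0 p))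

/-- The star operation `p ⋆ x⃗` for a punctured flag `x⃗` (top dimension `m`,
puncture at `i`), as a relation `StarP S m i x p φ` meaning `φ = p ⋆ x⃗`. -/
def StarP (S : PHg) (m i : ℕ) (x : ℕ → Option S.FaceS) (p : S.FaceS)
    (φ : CylFace S) : Prop :=
  (starG1 S i x p ∧ φ = CylFace.fl (truncO (p.1+1) x)) ∨
  (¬ starG1 S i x p ∧ starG2 S i x p ∧
    ∃ t, inDelta S t (gammaIter S (i+2) p) ∧ oLeP S (x (i+1)) t ∧
      φ = CylFace.fl (lowShape S p i t x)) ∨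
  (¬ starG1 S i x p ∧ ¬ starG2 S i x p ∧ starG3 S i x p ∧
    ∃ t, inDelta S t (gammaIter S (i+1) p) ∧
      (∃ q, x (i+1) = some q ∧ lePlus S (gammaS S q) t) ∧
      φ = CylFace.fl (lowShape S p (i-1) t x)) ∨
  (¬ starG1 S i x p ∧ ¬ starG2 S i x p ∧ ¬ starG3 S i x p ∧ starG4 S i x p ∧
    ∃ l t, l + 2 ≤ i ∧ l + 2 ≤ p.1 ∧ inDelta S t (gammaIter S (l+2) p) ∧
      oLeP S (x (l+1)) t ∧
      (∀ l' t', l < l' → l' + 2 ≤ i → l' + 2 ≤ p.1 →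
        ¬ (inDelta S t' (gammaIter S (l'+2) p) ∧ oLeP S (x (l'+1)) t')) ∧
      φ = CylFace.fl (lowShape S p l t x)) ∨
  (¬ starG1 S i x p ∧ ¬ starG2 S i x p ∧ ¬ starG3 S i x p ∧ ¬ starG4 S i x p ∧
    starG5 S i x p ∧ φ = CylFace.neg p) ∨
  (¬ starG1 S i x p ∧ ¬ starG2 S i x p ∧ ¬ starG3 S i x p ∧ ¬ starG4 S i x p ∧
    ¬ starG5 S i x p ∧ starG6 S i x p ∧ φ = CylFace.pos p)

/-- The star operation `p ⋆ x⃗` for a (maximal, total) flag `F`,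
as a relation `StarF S F p φ` meaning `φ = p ⋆ F`. -/
def StarF (S : PHg) (F : ℕ → S.FaceS) (p : S.FaceS) (φ : CylFace S) : Prop :=
  (p = F p.1 ∧ φ = CylFace.fl (fun j => if j ≤ p.1 then some (F j) else none)) ∨
  (p ≠ F p.1 ∧ 1 ≤ p.1 ∧ ltPlus S (F p.1) p ∧
    φ = CylFace.fl (fun j => if p.1 < j then none else if j = p.1 then some p
          else if j + 1 = p.1 then none else some (F j))) ∨
  (p ≠ F p.1 ∧ ¬ (1 ≤ p.1 ∧ ltPlus S (F p.1) p) ∧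
    ∃ l t, l + 2 ≤ p.1 ∧ inDelta S t (gammaIter S (l+2) p) ∧ lePlus S (F (l+1)) t ∧
      (∀ l' t', l < l' → l' + 2 ≤ p.1 →
        ¬ (inDelta S t' (gammaIter S (l'+2) p) ∧ lePlus S (F (l'+1)) t')) ∧
      φ = CylFace.fl (lowShape S p l t (fun j => some (F j)))) ∨
  (p ≠ F p.1 ∧ ¬ (1 ≤ p.1 ∧ ltPlus S (F p.1) p) ∧
    ¬ (∃ l t, l + 2 ≤ p.1 ∧ inDelta S t (gammaIter S (l+2) p) ∧ lePlus S (F (l+1)) t) ∧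
    lePlus S (gammaIter S 0 p) (F 0) ∧ φ = CylFace.neg p) ∨
  (p ≠ F p.1 ∧ ¬ (1 ≤ p.1 ∧ ltPlus S (F p.1) p) ∧
    ¬ (∃ l t, l + 2 ≤ p.1 ∧ inDelta S t (gammaIter S (l+2) p) ∧ lePlus S (F (l+1)) t) ∧
    ¬ lePlus S (gammaIter S 0 p) (F 0) ∧ ltPlus S (F 0) (gammaIter S 0 p) ∧
    φ = CylFace.pos p)

/-- Dimension of a cylinder face (number of non-dummy entries for (p-)flags). -/
noncomputable def cylDim (S : PHg) : CylFace S → ℕ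
  | CylFace.neg p => p.1
  | CylFace.pos p => p.1
  | CylFace.fl x => Nat.card {j : ℕ // (x j).isSome}

/-- Projection `π_P : Cyl(P) → P`. -/
noncomputable def cylProj (S : PHg) : CylFace S → Option S.FaceS
  | CylFace.neg p => some p
  | CylFace.pos p => some p
  | CylFace.fl x => x (sSup {j | (x j).isSome = true})

def IsCylFace (S : PHg) : CylFace S → Prop
  | CylFace.neg _ => True
  | CylFace.pos _ => True
  | CylFace.fl x => (∃ m, IsFlagFn S m x) ∨ (∃ m i, IsPFlagFn S m i x)

/-- `ψ = γ(φ)` in the cylinder hypergraph. -/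
def CylGamma (S : PHg) (ψ φ : CylFace S) : Prop :=
  match φ with
  | CylFace.neg p => 0 < p.1 ∧ ψ = CylFace.neg (gammaS S p)
  | CylFace.pos p => 0 < p.1 ∧ ψ = CylFace.pos (gammaS S p)
  | CylFace.fl x =>
    (∃ m, IsFlagFn S m x ∧
      ((m = 0 ∧ ∃ p, x 0 = some p ∧ ψ = CylFace.pos p) ∨
       (0 < m ∧ ψ = CylFace.fl (punctO (m-1) x)))) ∨
    (∃ m i, IsPFlagFn S m i x ∧
      (((i + 1 = m ∨ i + 2 = m) ∧
         ψ = CylFace.fl (fun j => if m ≤ j then none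
               else if j + 1 = m then (x m).map (gammaS S)
               else if j + 2 = m then none else x j)) ∨
       (i + 2 < m ∧ ψ = CylFace.fl (truncO m x))))

/-- `ψ ∈ δ(φ)` in the cylinder hypergraph. -/
def CylDelta (S : PHg) (ψ φ : CylFace S) : Prop :=
  match φ with
  | CylFace.neg p => ∃ q, inDelta S q p ∧ ψ = CylFace.neg q
  | CylFace.pos p => ∃ q, inDelta S q p ∧ ψ = CylFace.pos q
  | CylFace.fl x =>
    (∃ m, IsFlagFn S m x ∧
      ((m = 0 ∧ ∃ p, x 0 = some p ∧ ψ = CylFace.neg p) ∨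
       (0 < m ∧
         (ψ = CylFace.fl (truncO m x) ∨
          (IsFirstFlag S m x ∧ ∃ p, x m = some p ∧ ψ = CylFace.neg p) ∨
          (IsLastFlag S m x ∧ ∃ p, x m = some p ∧ ψ = CylFace.pos p) ∨
          (¬ IsFirstFlag S m x ∧ ¬ IsLastFlag S m x ∧
            ∃ i, LowLevelO S m x i ∧ ψ = CylFace.fl (punctO i x)))))) ∨
    (∃ m i, IsPFlagFn S m i x ∧
      ((∃ p q, x m = some q ∧ inDelta S p q ∧ StarP S m i x p ψ) ∨
       (i + 1 = m ∧ ψ = CylFace.fl (truncO m x))))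

/-- The least subset of the cylinder containing `φ0` and closed under `γ` and `δ`. -/
inductive InCyl (S : PHg) (φ0 : CylFace S) : CylFace S → Prop
  | base : InCyl S φ0 φ0
  | gam {φ ψ : CylFace S} : InCyl S φ0 φ → CylGamma S ψ φ → InCyl S φ0 ψ
  | del {φ ψ : CylFace S} : InCyl S φ0 φ → CylDelta S ψ φ → InCyl S φ0 ψ

/-- The subset `A` of the cylinder, with the induced `γ` and `δ`,
forms a positive opetope. -/
def SubCylOpetope (S : PHg) (A : CylFace S → Prop) : Prop :=
  ∃ (T : PHg) (e : ∀ k, T.Face k ≃ {φ : CylFace S // A φ ∧ cylDim S φ = k}),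
    IsOpetope T ∧
    ∀ (k : ℕ) (a : T.Face (k+1)) (b : T.Face k),
      (T.γ k a = b ↔ CylGamma S (e k b).1 (e (k+1) a).1) ∧
      (T.δ k a b ↔ CylDelta S (e k b).1 (e (k+1) a).1)

/-- `Option`-encoding of a total flag with top dimension `n`. -/
def toO (S : PHg) (n : ℕ) (F : ℕ → S.FaceS) : ℕ → Option S.FaceS :=
  fun j => if j ≤ n then some (F j) else none

/-- The intersection of two flags: dummy `0` wherever they differ. -/
noncomputable def interO (S : PHg) (n : ℕ) (F G : ℕ → S.FaceS) : ℕ → Option S.FaceS :=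
  fun j => if j ≤ n ∧ F j = G j then some (F j) else none
section Aux
variable {S : PHg}

lemma flagSome {m : ℕ} {x : ℕ → Option S.FaceS} (h : IsFlagFn S m x) {j : ℕ} (hj : j ≤ m) :
    ∃ p : S.FaceS, x j = some p ∧ p.1 = j := h.2.1 j hj

lemma flagNone {m : ℕ} {x : ℕ → Option S.FaceS} (h : IsFlagFn S m x) {j : ℕ} (hj : m < j) :
    x j = none := h.1 j hj

lemma pflagNoneI {m i : ℕ} {x : ℕ → Option S.FaceS} (h : IsPFlagFn S m i x) : x i = none := h.2.1

lemma pflagSome {m i : ℕ} {x : ℕ → Option S.FaceS} (h : IsPFlagFn S m i x) {j : ℕ}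
    (hj : j ≤ m) (hji : j ≠ i) : ∃ p : S.FaceS, x j = some p ∧ p.1 = j := by
  obtain ⟨_, _, y, hy, hxy, _⟩ := h
  obtain ⟨p, hp, hpd⟩ := flagSome hy hj
  exact ⟨p, (hxy j hji).trans hp, hpd⟩

lemma pflagNone {m i : ℕ} {x : ℕ → Option S.FaceS} (h : IsPFlagFn S m i x) {j : ℕ}
    (hj : m < j) : x j = none := by
  rcases eq_or_ne j i with rfl | hne
  · exact h.2.1
  · obtain ⟨_, _, y, hy, hxy, _⟩ := h
    exact (hxy j hne).trans (flagNone hy hj)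

lemma flagDimEq {m m' : ℕ} {x : ℕ → Option S.FaceS} (h : IsFlagFn S m x)
    (h' : IsFlagFn S m' x) : m = m' := by
  by_contra hne
  rcases Nat.lt_or_ge m m' with hlt | hge
  · obtain ⟨p, hp, _⟩ := flagSome h' (le_refl m')
    rw [flagNone h hlt] at hp; cases hp
  · obtain ⟨p, hp, _⟩ := flagSome h (le_refl m)
    rw [flagNone h' (by omega)] at hp; cases hp

lemma flagNotPflag {m m' i : ℕ} {x : ℕ → Option S.FaceS} (h : IsFlagFn S m x)
    (h' : IsPFlagFn S m' i x) : False := by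
  have hi := h'.1
  rcases le_or_gt i m with him | him
  · obtain ⟨p, hp, _⟩ := flagSome h him
    rw [pflagNoneI h'] at hp; cases hp
  · obtain ⟨p, hp, _⟩ := pflagSome h' (le_refl m') (by omega)
    rw [flagNone h (by omega)] at hp; cases hp

lemma pflagUnique {m m' i i' : ℕ} {x : ℕ → Option S.FaceS} (h : IsPFlagFn S m i x)
    (h' : IsPFlagFn S m' i' x) : m = m' ∧ i = i' := by
  have hi := h.1
  have hi' := h'.1
  have hm : m = m' := by
    by_contra hne
    rcases Nat.lt_or_ge m m' with hlt | hge
    · obtain ⟨p, hp, _⟩ := pflagSome h' (le_refl m') (by omega)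
      rw [pflagNone h hlt] at hp; cases hp
    · obtain ⟨p, hp, _⟩ := pflagSome h (le_refl m) (by omega)
      rw [pflagNone h' (by omega)] at hp; cases hp
  subst hm
  refine ⟨rfl, ?_⟩
  by_contra hne
  obtain ⟨p, hp, _⟩ := pflagSome h' (le_of_lt hi) (by omega)
  rw [pflagNoneI h] at hp; cases hp

lemma projEqTop {m : ℕ} {x : ℕ → Option S.FaceS} (hsome : (x m).isSome = true)
    (hnone : ∀ j, m < j → x j = none) : cylProj S (CylFace.fl x) = x m := by
  have hub : ∀ j ∈ {j | (x j).isSome = true}, j ≤ m := by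
    intro j hj
    by_contra hc
    push_neg at hc
    have hn := hnone j hc
    simp [Set.mem_setOf_eq, hn] at hj
  have hss : sSup {j | (x j).isSome = true} = m :=
    le_antisymm (csSup_le ⟨m, hsome⟩ hub) (le_csSup ⟨m, hub⟩ hsome)
  simp only [cylProj, hss]

lemma topOfProj {x : ℕ → Option S.FaceS}
    (hx : (∃ m, IsFlagFn S m x) ∨ (∃ m i, IsPFlagFn S m i x))
    {p : S.FaceS} (hpr : cylProj S (CylFace.fl x) = some p) :
    x p.1 = some p ∧ (IsFlagFn S p.1 x ∨ ∃ i, IsPFlagFn S p.1 i x) := by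
  rcases hx with ⟨m, hf⟩ | ⟨m, i, hf⟩
  · obtain ⟨q, hq, hqd⟩ := flagSome hf (le_refl m)
    rw [projEqTop (by rw [hq]; rfl) (fun j hj => flagNone hf hj), hq] at hpr
    obtain rfl := Option.some.inj hpr
    exact ⟨by rw [hqd]; exact hq, Or.inl (by rw [hqd]; exact hf)⟩
  · have hi := hf.1
    obtain ⟨q, hq, hqd⟩ := pflagSome hf (le_refl m) (by omega)
    rw [projEqTop (by rw [hq]; rfl) (fun j hj => pflagNone hf hj), hq] at hpr
    obtain rfl := Option.some.inj hpr
    exact ⟨by rw [hqd]; exact hq, Or.inr ⟨i, by rw [hqd]; exact hf⟩⟩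

lemma inDeltaDim {ka : ℕ} {pa : S.Face (ka+1)} {pp : S.FaceS}
    (h : inDelta S pp ⟨ka+1, pa⟩) : pp.1 = ka := by
  obtain ⟨h1, -⟩ := h; exact h1

end Aux
section Aux2
variable {S : PHg}

lemma flagFlagEq {k : ℕ} {x x' : ℕ → Option S.FaceS} {p : S.FaceS}
    (hf : IsFlagFn S (k+1) x) (hf' : IsFlagFn S (k+1) x')
    (hxm : x (k+1) = some p) (hx'm : x' (k+1) = some p)
    (hγ : CylGamma S (CylFace.fl (punctO k x)) (CylFace.fl x'))
    (hδ : CylDelta S (CylFace.fl (truncO (k+1) x)) (CylFace.fl x')) :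
    x = x' := by
  have hg : ∀ j, j ≠ k → x j = x' j := by
    rcases hγ with ⟨m₁, hf₁, hsub⟩ | ⟨m₁, i₁, hpf₁, -⟩
    · obtain rfl := flagDimEq hf₁ hf'
      rcases hsub with ⟨h0, -⟩ | ⟨-, heq⟩
      · exact absurd h0 (by omega)
      · injection heq with h
        intro j hj
        have hc := congrFun h j
        simpa only [punctO, Nat.add_sub_cancel, if_neg hj] using hc
    · exact (flagNotPflag hf' hpf₁).elim
  have hd : x k = x' k := by
    rcases hδ with ⟨m₁, hf₁, hsub⟩ | ⟨m₁, i₁, hpf₁, -⟩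
    · obtain rfl := flagDimEq hf₁ hf'
      rcases hsub with ⟨h0, -⟩ | ⟨-, htr | hneg | hpos | hpunct⟩
      · exact absurd h0 (by omega)
      · injection htr with h
        have hc := congrFun h k
        simpa only [truncO, if_neg (show ¬ k+1 ≤ k by omega)] using hc
      · obtain ⟨-, p₁, -, habs⟩ := hneg; cases habs
      · obtain ⟨-, p₁, -, habs⟩ := hpos; cases habs
      · obtain ⟨-, -, i₂, hll, habs⟩ := hpunct
        injection habs with h
        have hc := congrFun h (k+1)
        have hi2 : i₂ + 2 ≤ k + 1 := hll.1
        simp only [truncO, punctO, if_pos (le_refl (k+1)),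
          if_neg (show ¬ (k+1 = i₂) by omega), hx'm] at hc
        cases hc
    · exact (flagNotPflag hf' hpf₁).elim
  funext j
  rcases eq_or_ne j k with rfl | hj
  · exact hd
  · exact hg j hj

lemma flagPflagFalse {k i' : ℕ} {x x' : ℕ → Option S.FaceS} {p : S.FaceS}
    (hf : IsFlagFn S (k+1) x) (hpf' : IsPFlagFn S (k+1) i' x')
    (hxm : x (k+1) = some p)
    (hγ : CylGamma S (CylFace.fl (punctO k x)) (CylFace.fl x')) : False := by
  rcases hγ with ⟨m₁, hf₁, -⟩ | ⟨m₁, i₁, hpf₁, hsub⟩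
  · exact flagNotPflag hf₁ hpf'
  · obtain ⟨rfl, rfl⟩ := pflagUnique hpf₁ hpf'
    rcases hsub with ⟨-, heq⟩ | ⟨-, heq⟩ <;>
    · injection heq with h
      have hc := congrFun h (k+1)
      simp only [punctO, truncO, if_pos (le_refl (k+1)),
        if_neg (show ¬ (k+1 = k) by omega), hxm] at hc
      cases hc

lemma pflagLowEq {k i i' : ℕ} {x x' : ℕ → Option S.FaceS} {p : S.FaceS}
    (hpf : IsPFlagFn S (k+1) i x) (hpf' : IsPFlagFn S (k+1) i' x')
    (hi : i + 2 < k + 1)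
    (hxm : x (k+1) = some p) (hx'm : x' (k+1) = some p)
    (hγ : CylGamma S (CylFace.fl (truncO (k+1) x)) (CylFace.fl x')) :
    x = x' := by
  rcases hγ with ⟨m₁, hf₁, -⟩ | ⟨m₁, i₁, hpf₁, hsub⟩
  · exact (flagNotPflag hf₁ hpf').elim
  · obtain ⟨rfl, rfl⟩ := pflagUnique hpf₁ hpf'
    rcases hsub with ⟨-, heq⟩ | ⟨-, heq⟩
    · exfalso
      injection heq with h
      have hc := congrFun h (k-1)
      obtain ⟨q, hq, -⟩ := pflagSome hpf (show k-1 ≤ k+1 by omega) (show k-1 ≠ i by omega)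
      simp only [truncO, if_neg (show ¬ k+1 ≤ k-1 by omega), hq,
        if_neg (show ¬ (k-1)+1 = k+1 by omega), if_pos (show (k-1)+2 = k+1 by omega)] at hc
      cases hc
    · injection heq with h
      funext j
      rcases Nat.lt_or_ge j (k+1) with hj | hj
      · have hc := congrFun h j
        simpa only [truncO, if_neg (show ¬ k+1 ≤ j by omega)] using hc
      · rcases eq_or_ne j (k+1) with rfl | hne
        · rw [hxm, hx'm]
        · rw [pflagNone hpf (by omega), pflagNone hpf' (by omega)]

lemma caseBGamma {k i i' : ℕ} {x x' : ℕ → Option S.FaceS}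
    (hpf : IsPFlagFn S (k+1) i x) (hpf' : IsPFlagFn S (k+1) i' x')
    (hγ : CylGamma S (CylFace.fl (fun j => if k+1 ≤ j then none
        else if j+1 = k+1 then (x (k+1)).map (gammaS S)
        else if j+2 = k+1 then none else x j)) (CylFace.fl x')) :
    ∀ j, j + 2 < k + 1 → x j = x' j := by
  rcases hγ with ⟨m₁, hf₁, -⟩ | ⟨m₁, i₁, hpf₁, hsub⟩
  · exact (flagNotPflag hf₁ hpf').elim
  · obtain ⟨rfl, rfl⟩ := pflagUnique hpf₁ hpf'
    rcases hsub with ⟨-, heq⟩ | ⟨hc2, heq⟩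
    · injection heq with h
      intro j hj
      have hc := congrFun h j
      simpa only [if_neg (show ¬ k+1 ≤ j by omega), if_neg (show ¬ j+1 = k+1 by omega),
        if_neg (show ¬ j+2 = k+1 by omega)] using hc
    · exfalso
      injection heq with h
      have hc := congrFun h (k-1)
      obtain ⟨q, hq, -⟩ := pflagSome hpf' (show k-1 ≤ k+1 by omega) (show k-1 ≠ i₁ by omega)
      simp only [truncO, if_neg (show ¬ k+1 ≤ k-1 by omega), hq,
        if_neg (show ¬ (k-1)+1 = k+1 by omega), if_pos (show (k-1)+2 = k+1 by omega)] at hc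
      cases hc

end Aux2
section Aux3
variable {S : PHg}

lemma lowStarMem {k i : ℕ} {x : ℕ → Option S.FaceS} {pa : S.Face (k+1)} {q : S.FaceS}
    (hpf : IsPFlagFn S (k+1) i x) (hi : i + 2 = k + 1)
    (hxm : x (k+1) = some ⟨k+1, pa⟩) (hq : x k = some q) (hqd : q.1 = k) :
    CylDelta S (CylFace.fl (truncO (k+1) x)) (CylFace.fl x) := by
  refine Or.inr ⟨k+1, i, hpf, Or.inl ⟨q, ⟨k+1, pa⟩, hxm, ?_, ?_⟩⟩
  · obtain ⟨hilt, hxi, y, hy, hxy, hor⟩ := hpf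
    rcases hor with h1 | hll
    · exact absurd h1 (by omega)
    · obtain ⟨-, ⟨pq, qq, hy1, hy2, hdl⟩, -⟩ := hll
      have e1 : x (i+1) = some pq := (hxy (i+1) (by omega)).trans hy1
      have e2 : x (i+2) = some qq := (hxy (i+2) (by omega)).trans hy2
      rw [show i+1 = k from by omega, hq] at e1
      rw [hi, hxm] at e2
      obtain rfl := Option.some.inj e1
      obtain rfl := Option.some.inj e2
      exact hdl
  · refine Or.inl ⟨⟨by omega, ?_⟩, ?_⟩
    · rw [hqd]; exact hq
    · rw [hqd]

lemma caseB_hh {k : ℕ} {x x' : ℕ → Option S.FaceS} {pa : S.Face (k+1)}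
    (hpf : IsPFlagFn S (k+1) k x) (hpf' : IsPFlagFn S (k+1) k x')
    (hxm : x (k+1) = some ⟨k+1, pa⟩) (hx'm : x' (k+1) = some ⟨k+1, pa⟩)
    (hδ : CylDelta S (CylFace.fl (truncO (k+1) x)) (CylFace.fl x')) :
    truncO (k+1) x = truncO (k+1) x' := by
  rcases hδ with ⟨m₁, hf₁, -⟩ | ⟨m₁, i₁, hpf₁, hsub⟩
  · exact (flagNotPflag hf₁ hpf').elim
  obtain ⟨rfl, rfl⟩ := pflagUnique hpf' hpf₁
  rcases hsub with ⟨pp, qq, hqq, hdq, hstar⟩ | ⟨-, heq⟩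
  swap
  · injection heq
  have hqe : qq = ⟨k+1, pa⟩ := by rw [hqq] at hx'm; exact Option.some.inj hx'm
  subst hqe
  have hpp : pp.1 = k := inDeltaDim hdq
  exfalso
  rcases hstar with ⟨hG1, heq⟩ | ⟨-, hG2, t, ht, hle, heq⟩ | ⟨-, -, hG3, t, ht, hle3, heq⟩
    | ⟨-, -, -, hG4, l, t, hl1, hl2, ht, hle, hmin, heq⟩ | ⟨-, -, -, -, hG5, heq⟩
    | ⟨-, -, -, -, -, hG6, heq⟩
  · have h1 := hG1.2
    rw [hpp, pflagNoneI hpf'] at h1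
    cases h1
  · have h2 := hG2.1
    omega
  · rcases Nat.eq_zero_or_pos k with rfl | hk
    · exact absurd hG3.2.1 (by omega)
    · injection heq with h
      have hc := congrFun h k
      simp only [truncO, lowShape, if_neg (show ¬ k+1 ≤ k by omega), pflagNoneI hpf,
        if_neg (show ¬ pp.1 < k by omega), if_neg (show ¬ (k-1)+2 ≤ k by omega),
        if_pos (show k = (k-1)+1 by omega)] at hc
      cases hc
  · injection heq with h
    have hc := congrFun h l
    obtain ⟨w, hw, -⟩ := pflagSome hpf (show l ≤ k+1 by omega) (show l ≠ k by omega)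
    simp only [truncO, lowShape, if_neg (show ¬ k+1 ≤ l by omega), hw,
      if_neg (show ¬ pp.1 < l by omega), if_neg (show ¬ l+2 ≤ l by omega),
      if_neg (show ¬ l = l+1 by omega)] at hc
    simp at hc
  · cases heq
  · cases heq

lemma caseB_hl {k i' : ℕ} {x x' : ℕ → Option S.FaceS} {pa : S.Face (k+1)}
    (hpf : IsPFlagFn S (k+1) k x) (hpf' : IsPFlagFn S (k+1) i' x')
    (hi' : i' + 2 = k + 1)
    (hxm : x (k+1) = some ⟨k+1, pa⟩) (hx'm : x' (k+1) = some ⟨k+1, pa⟩)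
    (hδ : CylDelta S (CylFace.fl (truncO (k+1) x)) (CylFace.fl x')) : False := by
  rcases hδ with ⟨m₁, hf₁, -⟩ | ⟨m₁, i₁, hpf₁, hsub⟩
  · exact flagNotPflag hf₁ hpf'
  obtain ⟨rfl, rfl⟩ := pflagUnique hpf' hpf₁
  rcases hsub with ⟨pp, qq, hqq, hdq, hstar⟩ | ⟨hc, -⟩
  swap
  · omega
  have hqe : qq = ⟨k+1, pa⟩ := by rw [hqq] at hx'm; exact Option.some.inj hx'm
  subst hqe
  have hpp : pp.1 = k := inDeltaDim hdq
  rcases hstar with ⟨hG1, heq⟩ | ⟨-, hG2, t, ht, hle, heq⟩ | ⟨-, -, hG3, t, ht, hle3, heq⟩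
    | ⟨-, -, -, hG4, l, t, hl1, hl2, ht, hle, hmin, heq⟩ | ⟨-, -, -, -, hG5, heq⟩
    | ⟨-, -, -, -, -, hG6, heq⟩
  · rw [hpp] at heq
    injection heq with h
    have hc := congrFun h k
    have h1 := hG1.2
    rw [hpp] at h1
    simp only [truncO, if_neg (show ¬ k+1 ≤ k by omega), pflagNoneI hpf, h1] at hc
    cases hc
  · injection heq with h
    have hc := congrFun h k
    simp only [truncO, lowShape, if_neg (show ¬ k+1 ≤ k by omega), pflagNoneI hpf,
      if_neg (show ¬ pp.1 < k by omega), if_neg (show ¬ i'+2 ≤ k by omega),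
      if_pos (show k = i'+1 by omega)] at hc
    cases hc
  · have h0 : 0 < i' := hG3.2.1
    injection heq with h
    have hc := congrFun h k
    simp only [truncO, lowShape, if_neg (show ¬ k+1 ≤ k by omega), pflagNoneI hpf,
      if_neg (show ¬ pp.1 < k by omega), if_pos (show (i'-1)+2 ≤ k by omega)] at hc
    cases hc
  · injection heq with h
    have hc := congrFun h l
    obtain ⟨w, hw, -⟩ := pflagSome hpf (show l ≤ k+1 by omega) (show l ≠ k by omega)
    simp only [truncO, lowShape, if_neg (show ¬ k+1 ≤ l by omega), hw,
      if_neg (show ¬ pp.1 < l by omega), if_neg (show ¬ l+2 ≤ l by omega),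
      if_neg (show ¬ l = l+1 by omega)] at hc
    simp at hc
  · cases heq
  · cases heq

lemma caseB_ll {k i : ℕ} {x x' : ℕ → Option S.FaceS} {pa : S.Face (k+1)} {q : S.FaceS}
    (hpf : IsPFlagFn S (k+1) i x) (hpf' : IsPFlagFn S (k+1) i x')
    (hi : i + 2 = k + 1)
    (hxm : x (k+1) = some ⟨k+1, pa⟩) (hx'm : x' (k+1) = some ⟨k+1, pa⟩)
    (hq : x k = some q)
    (hδ : CylDelta S (CylFace.fl (truncO (k+1) x)) (CylFace.fl x')) :
    ∃ q', x' k = some q' ∧ lePlus S q' q := by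
  rcases hδ with ⟨m₁, hf₁, -⟩ | ⟨m₁, i₁, hpf₁, hsub⟩
  · exact (flagNotPflag hf₁ hpf').elim
  obtain ⟨rfl, rfl⟩ := pflagUnique hpf' hpf₁
  rcases hsub with ⟨pp, qq, hqq, hdq, hstar⟩ | ⟨hc, -⟩
  swap
  · exact absurd hc (by omega)
  have hqe : qq = ⟨k+1, pa⟩ := by rw [hqq] at hx'm; exact Option.some.inj hx'm
  subst hqe
  have hpp : pp.1 = k := inDeltaDim hdq
  rcases hstar with ⟨hG1, heq⟩ | ⟨-, hG2, t, ht, hle, heq⟩ | ⟨-, -, hG3, t, ht, hle3, heq⟩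
    | ⟨-, -, -, hG4, l, t, hl1, hl2, ht, hle, hmin, heq⟩ | ⟨-, -, -, -, hG5, heq⟩
    | ⟨-, -, -, -, -, hG6, heq⟩
  · rw [hpp] at heq
    injection heq with h
    have hc := congrFun h k
    simp only [truncO, if_neg (show ¬ k+1 ≤ k by omega), hq] at hc
    exact ⟨q, hc.symm, Or.inl rfl⟩
  · injection heq with h
    have hc := congrFun h k
    simp only [truncO, lowShape, if_neg (show ¬ k+1 ≤ k by omega), hq,
      if_neg (show ¬ pp.1 < k by omega), if_neg (show ¬ i+2 ≤ k by omega),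
      if_pos (show k = i+1 by omega)] at hc
    obtain rfl := Option.some.inj hc
    obtain ⟨q', hq', hle'⟩ := hle
    rw [show i+1 = k from by omega] at hq'
    exact ⟨q', hq', hle'⟩
  · have h0 : 0 < i := hG3.2.1
    injection heq with h
    have hc := congrFun h (i-1)
    obtain ⟨w, hw, -⟩ := pflagSome hpf (show i-1 ≤ k+1 by omega) (show i-1 ≠ i by omega)
    simp only [truncO, lowShape, if_neg (show ¬ k+1 ≤ i-1 by omega), hw,
      if_neg (show ¬ pp.1 < i-1 by omega), if_neg (show ¬ (i-1)+2 ≤ i-1 by omega),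
      if_neg (show ¬ i-1 = (i-1)+1 by omega)] at hc
    simp at hc
  · injection heq with h
    have hc := congrFun h l
    obtain ⟨w, hw, -⟩ := pflagSome hpf (show l ≤ k+1 by omega) (show l ≠ i by omega)
    simp only [truncO, lowShape, if_neg (show ¬ k+1 ≤ l by omega), hw,
      if_neg (show ¬ pp.1 < l by omega), if_neg (show ¬ l+2 ≤ l by omega),
      if_neg (show ¬ l = l+1 by omega)] at hc
    simp at hc
  · cases heq
  · cases heq

end Aux3
/-- Two (punctured) flag faces of the cylinder with the same
projection to `P_{k+1}`, the same codomain and the same domains are equal. -/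
theorem cylinder_face_determined_by_boundary
    (S : PHg) (hS : IsOpetope S) (k : ℕ)
    (x x' : ℕ → Option S.FaceS)
    (hx : (∃ m, IsFlagFn S m x) ∨ (∃ m i, IsPFlagFn S m i x))
    (hx' : (∃ m, IsFlagFn S m x') ∨ (∃ m i, IsPFlagFn S m i x'))
    (p : S.FaceS) (hp : p.1 = k + 1)
    (hproj : cylProj S (CylFace.fl x) = some p ∧ cylProj S (CylFace.fl x') = some p)
    (hdelta : ∀ ψ, CylDelta S ψ (CylFace.fl x) ↔ CylDelta S ψ (CylFace.fl x'))
    (hgamma : ∀ ψ, CylGamma S ψ (CylFace.fl x) ↔ CylGamma S ψ (CylFace.fl x')) :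
    x = x' := by
  obtain ⟨pd, pa⟩ := p
  obtain rfl : pd = k + 1 := hp
  obtain ⟨hprx, hprx'⟩ := hproj
  obtain ⟨htx0, hkx0⟩ := topOfProj (S := S) hx hprx
  obtain ⟨htx'0, hkx'0⟩ := topOfProj (S := S) hx' hprx'
  have htx : x (k+1) = some ⟨k+1, pa⟩ := htx0
  have htx' : x' (k+1) = some ⟨k+1, pa⟩ := htx'0
  have hkx : IsFlagFn S (k+1) x ∨ ∃ i, IsPFlagFn S (k+1) i x := hkx0
  have hkx' : IsFlagFn S (k+1) x' ∨ ∃ i, IsPFlagFn S (k+1) i x' := hkx'0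
  rcases hkx with hfx | ⟨i, hpx⟩ <;> rcases hkx' with hfx' | ⟨i', hpx'⟩
  · -- flag / flag
    have hγm : CylGamma S (CylFace.fl (punctO k x)) (CylFace.fl x) := by
      refine Or.inl ⟨k+1, hfx, Or.inr ⟨Nat.succ_pos k, ?_⟩⟩
      simp
    have hδm : CylDelta S (CylFace.fl (truncO (k+1) x)) (CylFace.fl x) :=
      Or.inl ⟨k+1, hfx, Or.inr ⟨Nat.succ_pos k, Or.inl rfl⟩⟩
    exact flagFlagEq hfx hfx' htx htx' ((hgamma _).mp hγm) ((hdelta _).mp hδm)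
  · -- flag / pflag
    have hγm : CylGamma S (CylFace.fl (punctO k x)) (CylFace.fl x) := by
      refine Or.inl ⟨k+1, hfx, Or.inr ⟨Nat.succ_pos k, ?_⟩⟩
      simp
    exact (flagPflagFalse hfx hpx' htx ((hgamma _).mp hγm)).elim
  · -- pflag / flag
    have hγm : CylGamma S (CylFace.fl (punctO k x')) (CylFace.fl x') := by
      refine Or.inl ⟨k+1, hfx', Or.inr ⟨Nat.succ_pos k, ?_⟩⟩
      simp
    exact (flagPflagFalse hfx' hpx htx' ((hgamma _).mpr hγm)).elim
  · -- pflag / pflag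
    by_cases hA : i + 2 < k + 1
    · have hγm : CylGamma S (CylFace.fl (truncO (k+1) x)) (CylFace.fl x) :=
        Or.inr ⟨k+1, i, hpx, Or.inr ⟨hA, rfl⟩⟩
      exact pflagLowEq hpx hpx' hA htx htx' ((hgamma _).mp hγm)
    by_cases hA' : i' + 2 < k + 1
    · have hγm : CylGamma S (CylFace.fl (truncO (k+1) x')) (CylFace.fl x') :=
        Or.inr ⟨k+1, i', hpx', Or.inr ⟨hA', rfl⟩⟩
      exact (pflagLowEq hpx' hpx hA' htx' htx ((hgamma _).mpr hγm)).symm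
    have hilt := hpx.1
    have hilt' := hpx'.1
    have hiB : i + 1 = k + 1 ∨ i + 2 = k + 1 := by omega
    have hiB' : i' + 1 = k + 1 ∨ i' + 2 = k + 1 := by omega
    have hγm : CylGamma S (CylFace.fl (fun j => if k+1 ≤ j then none
        else if j+1 = k+1 then (x (k+1)).map (gammaS S)
        else if j+2 = k+1 then none else x j)) (CylFace.fl x) :=
      Or.inr ⟨k+1, i, hpx, Or.inl ⟨hiB, rfl⟩⟩
    have hlow : ∀ j, j + 2 < k + 1 → x j = x' j :=
      caseBGamma hpx hpx' ((hgamma _).mp hγm)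
    rcases hiB with hB1 | hB2 <;> rcases hiB' with hB1' | hB2'
    · -- i = k, i' = k
      obtain rfl : k = i := by omega
      obtain rfl : k = i' := by omega
      have hδm : CylDelta S (CylFace.fl (truncO (k+1) x)) (CylFace.fl x) :=
        Or.inr ⟨k+1, k, hpx, Or.inr ⟨rfl, rfl⟩⟩
      have htr := caseB_hh hpx hpx' htx htx' ((hdelta _).mp hδm)
      funext j
      rcases Nat.lt_or_ge j (k+1) with hj | hj
      · have hc := congrFun htr j
        simpa only [truncO, if_neg (show ¬ k+1 ≤ j by omega)] using hc
      · rcases eq_or_ne j (k+1) with rfl | hne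
        · rw [htx, htx']
        · rw [pflagNone hpx (by omega), pflagNone hpx' (by omega)]
    · -- i = k, i' low
      obtain rfl : k = i := by omega
      have hδm : CylDelta S (CylFace.fl (truncO (k+1) x)) (CylFace.fl x) :=
        Or.inr ⟨k+1, k, hpx, Or.inr ⟨rfl, rfl⟩⟩
      exact (caseB_hl hpx hpx' hB2' htx htx' ((hdelta _).mp hδm)).elim
    · -- i low, i' = k
      obtain rfl : k = i' := by omega
      have hδm : CylDelta S (CylFace.fl (truncO (k+1) x')) (CylFace.fl x') :=
        Or.inr ⟨k+1, k, hpx', Or.inr ⟨rfl, rfl⟩⟩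
      exact (caseB_hl hpx' hpx hB2 htx' htx ((hdelta _).mpr hδm)).elim
    · -- both low
      obtain rfl : i = i' := by omega
      obtain ⟨q, hq, hqd⟩ := pflagSome hpx (show k ≤ k+1 by omega) (show k ≠ i by omega)
      obtain ⟨q', hq', hqd'⟩ := pflagSome hpx' (show k ≤ k+1 by omega) (show k ≠ i by omega)
      have hδm := lowStarMem hpx hB2 htx hq hqd
      have hδm' := lowStarMem hpx' hB2' htx' hq' hqd'
      obtain ⟨q₁, hq₁, hle₁⟩ := caseB_ll hpx hpx' hB2 htx htx' hq ((hdelta _).mp hδm)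
      obtain ⟨q₂, hq₂, hle₂⟩ := caseB_ll hpx' hpx hB2 htx' htx hq' ((hdelta _).mpr hδm')
      rw [hq'] at hq₁
      obtain rfl := Option.some.inj hq₁
      rw [hq] at hq₂
      obtain rfl := Option.some.inj hq₂
      have hqq : q = q' := by
        rcases hle₂ with h | h2
        · exact h
        rcases hle₁ with h | h1
        · exact h.symm
        · exact absurd (Relation.TransGen.trans h2 h1) (hS.strict q)
      funext j
      rcases Nat.lt_or_ge j (k+1) with hj | hj
      · rcases Nat.lt_or_ge j i with hjlt | hjge
        · exact hlow j (by omega)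
        · rcases eq_or_ne j i with rfl | hji
          · rw [pflagNoneI hpx, pflagNoneI hpx']
          · obtain rfl : j = k := by omega
            rw [hq, hq', hqq]
      · rcases eq_or_ne j (k+1) with rfl | hne
        · rw [htx, htx']
        · rw [pflagNone hpx (by omega), pflagNone hpx' (by omega)]
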